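/- Every rooted tree on n vertices admits a balanced caterpillar decomposition: a root-to-leaf path B (the backbone) such that every connected component of the tree after removing the vertices of B has at most n/2 vertices. -/

import Mathlib

open SimpleGraph

namespace Stmt1Aux

variable {V : Type*}

/-- Reachability in `G` via a walk avoiding the set `S`. -/
def R (G : SimpleGraph V) (S : Set V) (x y : V) : Prop :=
  ∃ w : G.Walk x y, ∀ v ∈ w.support, v ∉ S

lemma R.symm {G : SimpleGraph V} {S : Set V} {x y : V} (h : R G S x y) : R G S y x := by
  obtain ⟨w, hw⟩ := h
  exact ⟨w.reverse, by simpa [Walk.support_reverse] using hw⟩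

lemma R.trans {G : SimpleGraph V} {S : Set V} {x y z : V} (h1 : R G S x y) (h2 : R G S y z) :
    R G S x z := by
  obtain ⟨w1, hw1⟩ := h1; obtain ⟨w2, hw2⟩ := h2
  refine ⟨w1.append w2, fun v hv => ?_⟩
  rcases (Walk.mem_support_append_iff _ _).1 hv with h | h
  · exact hw1 v h
  · exact hw2 v h

lemma R.notMem_left {G : SimpleGraph V} {S : Set V} {x y : V} (h : R G S x y) : x ∉ S :=
  h.choose_spec x h.choose.start_mem_support

lemma R.notMem_right {G : SimpleGraph V} {S : Set V} {x y : V} (h : R G S x y) : y ∉ S :=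
  h.symm.notMem_left

lemma R.congr {G : SimpleGraph V} {S T : Set V} {x y : V} (hST : ∀ v, v ∈ S ↔ v ∈ T)
    (h : R G S x y) : R G T x y := by
  obtain ⟨w, hw⟩ := h
  exact ⟨w, fun v hv hT => hw v hv ((hST v).2 hT)⟩

/-- From a walk reaching `c` while avoiding `S`, extract a neighbor `y` of `c`
reachable from `x` avoiding `S ∪ {c}`. -/
lemma exists_adj_of_R [DecidableEq V] {G : SimpleGraph V} {S : Set V} {x c : V} (hxc : x ≠ c)
    (h : R G S x c) : ∃ y, R G (S ∪ {c}) x y ∧ G.Adj y c := by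
  obtain ⟨w, hw⟩ := h
  have hp : w.toPath.1.IsPath := w.toPath.2
  have hsub := Walk.support_toPath_subset w
  set q := w.toPath.1 with hq
  obtain ⟨z, hadj, w', hw'⟩ := Walk.exists_eq_cons_of_ne (Ne.symm hxc) q.reverse
  have hqr : q.reverse.IsPath := (Walk.isPath_reverse_iff q).2 hp
  rw [hw'] at hqr
  obtain ⟨hw'p, hcn⟩ := (Walk.cons_isPath_iff _ _).1 hqr
  have hsupp : ∀ v ∈ w'.support, v ∈ q.support := by
    intro v hv
    have : v ∈ q.reverse.support := by rw [hw', Walk.support_cons]; exact List.mem_cons_of_mem _ hv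
    rwa [Walk.support_reverse, List.mem_reverse] at this
  refine ⟨z, ⟨w'.reverse, ?_⟩, hadj.symm⟩
  intro v hv
  rw [Walk.support_reverse, List.mem_reverse] at hv
  rintro (hvS | hvc)
  · exact hw v (hsub (hsupp v hv)) hvS
  · exact hcn (by rwa [Set.mem_singleton_iff.mp hvc] at hv)

lemma of_induce_walk (G : SimpleGraph V) {s : Set V} :
    ∀ {a b : s} (_ : (G.induce s).Walk a b),
      ∃ w' : G.Walk a.1 b.1, ∀ v ∈ w'.support, v ∈ s := by
  intro a b w
  induction w with
  | nil => exact ⟨Walk.nil, by simpa using a.2⟩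
  | @cons u v b hadj w ih =>
      obtain ⟨w', hw'⟩ := ih
      refine ⟨Walk.cons hadj w', ?_⟩
      intro x hx
      rcases List.mem_cons.1 (show x ∈ (u : V) :: w'.support from hx) with rfl | hx
      · exact u.2
      · exact hw' x hx

lemma reachable_induce_of_walk (G : SimpleGraph V) {s : Set V} :
    ∀ {a b : V} (w : G.Walk a b), (∀ v ∈ w.support, v ∈ s) → ∀ (ha : a ∈ s) (hb : b ∈ s),
      (G.induce s).Reachable ⟨a, ha⟩ ⟨b, hb⟩ := by
  intro a b w
  induction w with
  | nil => intro _ ha hb; exact Reachable.refl _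
  | @cons u v b hadj w ih =>
      intro hw ha hb
      have hv : v ∈ s := hw v (by simp [Walk.support_cons])
      have h1 : (G.induce s).Adj ⟨u, ha⟩ ⟨v, hv⟩ := hadj
      exact h1.reachable.trans (ih (fun x hx => hw x (by simp [Walk.support_cons, hx])) hv hb)

lemma supp_image (G : SimpleGraph V) (S : Set V) {x : V} (hx : x ∉ S) :
    Subtype.val '' ((G.induce {w | w ∉ S}).connectedComponentMk ⟨x, hx⟩).supp
      = {y | R G S x y} := by
  ext y
  simp only [Set.mem_image, ConnectedComponent.mem_supp_iff, Set.mem_setOf_eq]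
  constructor
  · rintro ⟨⟨y', hy'⟩, hmk, rfl⟩
    have hr : (G.induce {w | w ∉ S}).Reachable ⟨y', hy'⟩ ⟨x, hx⟩ :=
      (ConnectedComponent.eq).1 hmk
    obtain ⟨w⟩ := hr
    obtain ⟨w', hw'⟩ := of_induce_walk G w
    exact R.symm (G := G) (S := S) ⟨w', hw'⟩
  · intro hR
    have hy : y ∉ S := R.notMem_right hR
    obtain ⟨w, hw⟩ := hR
    refine ⟨⟨y, hy⟩, ?_, rfl⟩
    exact (ConnectedComponent.eq).2
      (reachable_induce_of_walk G w.reverse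
        (by intro v hv; rw [Walk.support_reverse, List.mem_reverse] at hv; exact hw v hv) hy hx)

lemma two_mul_ncard_le [Fintype V] {A B : Set V} (hd : ∀ y, y ∈ A → y ∈ B → False)
    (hAB : A.ncard ≤ B.ncard) : 2 * A.ncard ≤ Fintype.card V := by
  have hdis : Disjoint A B := Set.disjoint_left.mpr fun a ha hb => hd a ha hb
  have h1 : (A ∪ B).ncard ≤ Fintype.card V := by
    have := Set.ncard_le_ncard (Set.subset_univ (A ∪ B)) (Set.toFinite _)
    rwa [Set.ncard_univ, Nat.card_eq_fintype_card] at this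
  rw [Set.ncard_union_eq hdis (Set.toFinite A) (Set.toFinite B)] at h1
  omega

lemma comp_bound (G : SimpleGraph V) [Fintype V] (S : Set V)
    (h : ∀ x ∉ S, 2 * {y | R G S x y}.ncard ≤ Fintype.card V) :
    ∀ C : (G.induce {w | w ∉ S}).ConnectedComponent, 2 * C.supp.ncard ≤ Fintype.card V := by
  intro C
  obtain ⟨⟨x, hx⟩, hC⟩ := C.exists_rep
  have himg := supp_image G S hx
  have hcard : ((G.induce {w | w ∉ S}).connectedComponentMk ⟨x, hx⟩).supp.ncard
      = {y | R G S x y}.ncard := by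
    rw [← himg, Set.ncard_image_of_injective _ Subtype.val_injective]
  rw [← hC]
  show 2 * ((G.induce {w | w ∉ S}).connectedComponentMk ⟨x, hx⟩).supp.ncard ≤ Fintype.card V
  rw [hcard]
  exact h x hx
lemma unique_nbr [DecidableEq V] {G : SimpleGraph V} (hT : G.IsTree) {r l : V}
    (p : G.Walk r l) (hp : p.IsPath) {y z : V} (hy : y ∈ p.support) (hay : G.Adj l y)
    (hz : z ∈ p.support) (haz : G.Adj l z) : y = z := by
  have key : ∀ {u : V} (hu : u ∈ p.support) (hau : G.Adj l u),
      ((p.takeUntil u hu).concat hau.symm).IsPath := by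
    intro u hu hau
    have hul : l ∉ (p.takeUntil u hu).support := by
      have hnd := hp.support_nodup
      rw [← Walk.take_spec p hu, Walk.support_append] at hnd
      have hdisj := List.disjoint_of_nodup_append hnd
      intro hmem
      apply hdisj hmem
      have h1 : l ∈ (p.dropUntil u hu).support := Walk.end_mem_support _
      rw [Walk.support_eq_cons] at h1
      rcases List.mem_cons.1 h1 with h | h
      · exact absurd h (G.ne_of_adj hau)
      · exact h
    rw [← Walk.isPath_reverse_iff, Walk.reverse_concat]
    refine (Walk.cons_isPath_iff _ _).2 ⟨(Walk.isPath_reverse_iff _).2 (hp.takeUntil hu), ?_⟩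
    rw [Walk.support_reverse, List.mem_reverse]
    exact hul
  have heq := (hT.existsUnique_path r l).unique (key hy hay) (key hz haz)
  obtain ⟨hv, -⟩ := Walk.concat_inj heq
  exact hv

lemma terminal [Fintype V] [DecidableEq V] {G : SimpleGraph V} [DecidableRel G.Adj]
    (hT : G.IsTree) {r l : V} (p : G.Walk r l) (hp : p.IsPath)
    (hnone : ∀ c, G.Adj l c → c ∈ p.support)
    (hinv : ∀ x, x ∉ p.support → (∃ y, R G {v | v ∈ p.support} x y ∧ G.Adj l y) ∨
      2 * {y | R G {v | v ∈ p.support} x y}.ncard ≤ Fintype.card V) :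
    G.degree l ≤ 1 ∧
      ∀ x, x ∉ p.support → 2 * {y | R G {v | v ∈ p.support} x y}.ncard ≤ Fintype.card V := by
  constructor
  · show (G.neighborFinset l).card ≤ 1
    rw [Finset.card_le_one]
    intro y hy z hz
    rw [mem_neighborFinset] at hy hz
    exact unique_nbr hT p hp (hnone y hy) hy (hnone z hz) hz
  · intro x hx
    rcases hinv x hx with ⟨y, hRy, hadj⟩ | h
    · have hy' : y ∉ {v | v ∈ p.support} := R.notMem_right hRy
      exact absurd (hnone y hadj) hy'
    · exact h

lemma main {V : Type*} [Fintype V] [DecidableEq V] (G : SimpleGraph V) [DecidableRel G.Adj]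
    (hT : G.IsTree) (r : V) :
    ∀ (k : ℕ) (l : V) (p : G.Walk r l), p.IsPath →
      {v : V | v ∉ p.support}.ncard ≤ k →
      (∀ x, x ∉ p.support → (∃ y, R G {v | v ∈ p.support} x y ∧ G.Adj l y) ∨
        2 * {y | R G {v | v ∈ p.support} x y}.ncard ≤ Fintype.card V) →
      ∃ (l' : V) (p' : G.Walk r l'), p'.IsPath ∧ G.degree l' ≤ 1 ∧
        ∀ x, x ∉ p'.support →
          2 * {y | R G {v | v ∈ p'.support} x y}.ncard ≤ Fintype.card V := by
  intro k
  induction k with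
  | zero =>
    intro l p hp hcard hinv
    have hempty : {v : V | v ∉ p.support} = ∅ :=
      (Set.ncard_eq_zero (Set.toFinite _)).1 (Nat.le_zero.1 hcard)
    have hnone : ∀ c, G.Adj l c → c ∈ p.support := by
      intro c _
      by_contra h
      exact (Set.eq_empty_iff_forall_notMem.1 hempty) c h
    obtain ⟨hdeg, hbd⟩ := terminal hT p hp hnone hinv
    exact ⟨l, p, hp, hdeg, hbd⟩
  | succ k ih =>
    intro l p hp hcard hinv
    by_cases hex : ∃ c, c ∉ p.support ∧ G.Adj l c
    · obtain ⟨c0, hc0, hadj0⟩ := hex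
      set f : V → ℕ := fun c => {y | R G {v | v ∈ p.support} c y}.ncard with hf
      set A : Finset V := Finset.univ.filter (fun c => c ∉ p.support ∧ G.Adj l c) with hA
      have hAne : A.Nonempty := ⟨c0, by simp [hA, hc0, hadj0]⟩
      obtain ⟨c, hcA, hmax⟩ := Finset.exists_max_image A f hAne
      rw [hA, Finset.mem_filter] at hcA
      obtain ⟨-, hc, hadjc⟩ := hcA
      set p' : G.Walk r c := p.concat hadjc with hp'def
      have hsupp' : ∀ v, v ∈ p'.support ↔ v ∈ p.support ∨ v = c := by
        intro v
        rw [hp'def, Walk.support_concat, List.mem_append]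
        simp
      have hp'path : p'.IsPath := by
        rw [hp'def, ← Walk.isPath_reverse_iff, Walk.reverse_concat]
        refine (Walk.cons_isPath_iff _ _).2 ⟨(Walk.isPath_reverse_iff p).2 hp, ?_⟩
        rw [Walk.support_reverse, List.mem_reverse]
        exact hc
      have hseteq : {v : V | v ∉ p'.support} = {v : V | v ∉ p.support} \ {c} := by
        ext v
        simp only [Set.mem_setOf_eq, Set.mem_diff, Set.mem_singleton_iff, hsupp' v]
        tauto
      have hlt : {v : V | v ∉ p'.support}.ncard ≤ k := by
        rw [hseteq]
        have h1 := Set.ncard_diff_singleton_lt_of_mem (show c ∈ {v : V | v ∉ p.support} from hc)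
          (Set.toFinite _)
        omega
      have hinv' : ∀ x, x ∉ p'.support →
          (∃ y, R G {v | v ∈ p'.support} x y ∧ G.Adj c y) ∨
          2 * {y | R G {v | v ∈ p'.support} x y}.ncard ≤ Fintype.card V := by
        intro x hx'
        have hx : x ∉ p.support := fun h => hx' ((hsupp' x).2 (Or.inl h))
        have hxc : x ≠ c := fun h => hx' ((hsupp' x).2 (Or.inr h))
        have hSS' : ∀ v, v ∈ ({v | v ∈ p'.support} : Set V) ↔
            v ∈ ({v | v ∈ p.support} : Set V) ∪ {c} := by
          intro v
          simp only [Set.mem_union, Set.mem_setOf_eq, Set.mem_singleton_iff]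
          exact hsupp' v
        by_cases hRxc : R G {v | v ∈ p.support} x c
        · left
          obtain ⟨y, hRy, hadjyc⟩ := exists_adj_of_R hxc hRxc
          exact ⟨y, R.congr (fun v => (hSS' v).symm) hRy, hadjyc.symm⟩
        · have hcompeq : {y | R G {v | v ∈ p'.support} x y}
              = {y | R G {v | v ∈ p.support} x y} := by
            ext y
            simp only [Set.mem_setOf_eq]
            constructor
            · rintro ⟨w, hw⟩
              exact ⟨w, fun v hv hvS => hw v hv ((hSS' v).2 (Or.inl hvS))⟩
            · rintro ⟨w, hw⟩
              refine ⟨w, fun v hv hvS' => ?_⟩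
              rcases (hSS' v).1 hvS' with hvS | hvc
              · exact hw v hv hvS
              · apply hRxc
                rw [Set.mem_singleton_iff] at hvc
                subst hvc
                exact ⟨w.takeUntil v hv, fun u hu =>
                  hw u (Walk.support_takeUntil_subset _ _ hu)⟩
          rcases hinv x hx with ⟨y, hRy, hadjly⟩ | hbound
          · right
            rw [hcompeq]
            have hyA : y ∈ A := by
              rw [hA, Finset.mem_filter]
              have hy' : y ∉ {v | v ∈ p.support} := R.notMem_right hRy
              exact ⟨Finset.mem_univ _, hy', hadjly⟩
            have hle : f y ≤ f c := hmax y hyA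
            have hycomp : {z | R G {v | v ∈ p.support} y z}
                = {z | R G {v | v ∈ p.support} x z} := by
              ext z
              simp only [Set.mem_setOf_eq]
              exact ⟨fun h => R.trans hRy h, fun h => R.trans (R.symm hRy) h⟩
            refine two_mul_ncard_le (B := {z | R G {v | v ∈ p.support} c z}) ?_ ?_
            · intro z hz1 hz2
              exact hRxc (R.trans hz1 (R.symm hz2))
            · rw [← hycomp]
              exact hle
          · right
            rw [hcompeq]
            exact hbound
      exact ih c p' hp'path hlt hinv'
    · push_neg at hex
      have hnone : ∀ c, G.Adj l c → c ∈ p.support := by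
        intro c hadj
        by_contra h
        exact hex c h hadj
      obtain ⟨hdeg, hbd⟩ := terminal hT p hp hnone hinv
      exact ⟨l, p, hp, hdeg, hbd⟩

end Stmt1Aux

open Stmt1Aux

/-- Every rooted tree on `n` vertices admits a balanced caterpillar decomposition:
a root-to-leaf path `B` (the backbone) such that every connected component of the
tree after removing the vertices of `B` has at most `n/2` vertices. -/
theorem stmt1 {V : Type*} [Fintype V] [DecidableEq V] (G : SimpleGraph V)
    [DecidableRel G.Adj] (hT : G.IsTree) (r : V) :
    ∃ (l : V) (p : G.Walk r l), p.IsPath ∧ G.degree l ≤ 1 ∧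
      ∀ C : (G.induce {w : V | w ∉ p.support}).ConnectedComponent,
        2 * C.supp.ncard ≤ Fintype.card V := by
  have h0 : {v : V | v ∉ (Walk.nil : G.Walk r r).support}.ncard ≤ Fintype.card V := by
    have := Set.ncard_le_ncard (Set.subset_univ {v : V | v ∉ (Walk.nil : G.Walk r r).support})
      (Set.toFinite _)
    rwa [Set.ncard_univ, Nat.card_eq_fintype_card] at this
  have hinv0 : ∀ x, x ∉ (Walk.nil : G.Walk r r).support →
      (∃ y, R G {v | v ∈ (Walk.nil : G.Walk r r).support} x y ∧ G.Adj r y) ∨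
      2 * {y | R G {v | v ∈ (Walk.nil : G.Walk r r).support} x y}.ncard ≤ Fintype.card V := by
    intro x hx
    have hxr : x ≠ r := by simpa using hx
    left
    obtain ⟨w⟩ := hT.isConnected.preconnected x r
    have hR0 : R G (∅ : Set V) x r := ⟨w, fun v _ h => h⟩
    obtain ⟨y, hRy, hadj⟩ := exists_adj_of_R hxr hR0
    refine ⟨y, R.congr (fun v => ?_) hRy, hadj.symm⟩
    simp [Walk.support_nil]
  obtain ⟨l, p, hp, hdeg, hbound⟩ :=
    main G hT r (Fintype.card V) r Walk.nil Walk.IsPath.nil h0 hinv0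
  refine ⟨l, p, hp, hdeg, ?_⟩
  intro C
  exact comp_bound G {v : V | v ∈ p.support} (fun x hx => hbound x hx) C
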